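/- arXiv:2511.02391 — 2 statements merged into one kernel-verified Lean document; each statement's English description precedes it below -/
import Mathlib

section
/- Let h be a measurable function with |h(x)| ≤ 1 for all real x, and let N be a standard normal random variable. Then the function f(x) = e^{x²/2} ∫_{-∞}^x (h(y) − E[h(N)]) e^{−y²/2} dy is the unique bounded solution of Stein's equation f'(x) − x f(x) = h(x) − E[h(N)], and it satisfies ‖f‖_∞ ≤ √(2π) and ‖f'‖_∞ ≤ 4. -/
open MeasureTheory ProbabilityTheory Real Filter
open scoped ENNReal NNReal Topology

section SteinAux

open Set Metric


lemma gauss_integrable : Integrable (fun y : ℝ => Real.exp (-y ^ 2 / 2)) := by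
  have := integrable_exp_neg_mul_sq (b := 1/2) (by norm_num)
  refine this.congr (ae_of_all _ fun y => ?_)
  ring_nf

lemma gauss_integral : ∫ y : ℝ, Real.exp (-y ^ 2 / 2) = Real.sqrt (2 * π) := by
  have := integral_gaussian (1/2)
  rw [show π / (1/2 : ℝ) = 2 * π by ring] at this
  rw [← this]
  congr 1 with y
  ring_nf

lemma gauss_Ioi_integral : ∫ y in Set.Ioi (0:ℝ), Real.exp (-y ^ 2 / 2) = Real.sqrt (2 * π) / 2 := by
  have := integral_gaussian_Ioi (1/2)
  rw [show π / (1/2 : ℝ) = 2 * π by ring] at this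
  rw [← this]
  congr 1 with y
  ring_nf

lemma shift_integral (t : ℝ) (g : ℝ → ℝ) :
    ∫ y in Set.Ioi t, g (y - t) = ∫ u in Set.Ioi (0:ℝ), g u := by
  have A : MeasurableEmbedding fun x : ℝ => x + t :=
    (Homeomorph.addRight t).measurableEmbedding
  have := A.setIntegral_map (μ := volume) (g := fun y => g (y - t)) (s := Set.Ioi t)
  rw [map_add_right_eq_self volume t] at this
  rw [this]
  simp [Set.preimage_add_const_Ioi]

lemma gauss_tail_le {t : ℝ} (ht : 0 ≤ t) :
    ∫ y in Set.Ioi t, Real.exp (-y ^ 2 / 2) ≤ Real.sqrt (2 * π) / 2 * Real.exp (-t ^ 2 / 2) := by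
  have hint : Integrable (fun y : ℝ => Real.exp (-(y - t) ^ 2 / 2)) :=
    gauss_integrable.comp_sub_right t
  calc ∫ y in Set.Ioi t, Real.exp (-y ^ 2 / 2)
      ≤ ∫ y in Set.Ioi t, Real.exp (-t ^ 2 / 2) * Real.exp (-(y - t) ^ 2 / 2) := by
        refine setIntegral_mono_on gauss_integrable.integrableOn
          (hint.const_mul _).integrableOn measurableSet_Ioi fun y hy => ?_
        rw [← Real.exp_add]
        apply Real.exp_le_exp.2
        have : t < y := hy
        nlinarith
    _ = Real.exp (-t ^ 2 / 2) * ∫ y in Set.Ioi t, Real.exp (-(y - t) ^ 2 / 2) := by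
        rw [integral_const_mul]
    _ = Real.exp (-t ^ 2 / 2) * (Real.sqrt (2 * π) / 2) := by
        rw [shift_integral t (fun u => Real.exp (-u ^ 2 / 2)), gauss_Ioi_integral]
    _ = Real.sqrt (2 * π) / 2 * Real.exp (-t ^ 2 / 2) := by ring

lemma gauss_mul_integral {t : ℝ} :
    ∫ y in Set.Ioi t, y * Real.exp (-y ^ 2 / 2) = Real.exp (-t ^ 2 / 2) := by
  have hd : ∀ y ∈ Set.Ici t, HasDerivAt (fun y : ℝ => -Real.exp (-y ^ 2 / 2))
      (y * Real.exp (-y ^ 2 / 2)) y := by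
    intro y _
    have h1 : HasDerivAt (fun y : ℝ => -y ^ 2 / 2) (-y) y := by
      have := ((hasDerivAt_pow 2 y).neg).div_const 2
      simpa using this.congr_deriv (by ring)
    have : HasDerivAt (fun y : ℝ => -Real.exp (-y ^ 2 / 2)) (-(Real.exp (-y ^ 2 / 2) * -y)) y :=
      (h1.exp).neg
    convert this using 1
    ring
  have hint : IntegrableOn (fun y : ℝ => y * Real.exp (-y ^ 2 / 2)) (Set.Ioi t) := by
    have : Integrable (fun y : ℝ => y * Real.exp (-y ^ 2 / 2)) := by
      have := integrable_mul_exp_neg_mul_sq (b := 1/2) (by norm_num)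
      refine this.congr (ae_of_all _ fun y => ?_)
      ring_nf
    exact this.integrableOn
  have htend : Tendsto (fun y : ℝ => -Real.exp (-y ^ 2 / 2)) atTop (𝓝 0) := by
    rw [show (0:ℝ) = -0 by ring]
    apply Tendsto.neg
    have : Tendsto (fun y : ℝ => y ^ 2 / 2) atTop atTop :=
      (tendsto_pow_atTop (by norm_num)).atTop_div_const (by norm_num)
    have := Real.tendsto_exp_neg_atTop_nhds_zero.comp this
    refine this.congr fun y => ?_
    simp [Function.comp, neg_div]
  have := integral_Ioi_of_hasDerivAt_of_tendsto' hd hint htend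
  rw [this]
  simp

lemma gauss_tail_mul_le {t : ℝ} (ht : 0 ≤ t) :
    t * ∫ y in Set.Ioi t, Real.exp (-y ^ 2 / 2) ≤ Real.exp (-t ^ 2 / 2) := by
  rw [← gauss_mul_integral (t := t), ← integral_const_mul]
  refine setIntegral_mono_on (gauss_integrable.const_mul t).integrableOn
    ?_ measurableSet_Ioi fun y hy => ?_
  · have : Integrable (fun y : ℝ => y * Real.exp (-y ^ 2 / 2)) := by
      have := integrable_mul_exp_neg_mul_sq (b := 1/2) (by norm_num)
      refine this.congr (ae_of_all _ fun y => ?_)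
      ring_nf
    exact this.integrableOn
  · have : t < y := hy
    have := Real.exp_pos (-y ^ 2 / 2)
    nlinarith

lemma ftc_ae (φ : ℝ → ℝ) (hφ : Integrable φ) :
    ∀ᵐ x ∂(volume : Measure ℝ), HasDerivAt (fun x => ∫ y in Set.Iic x, φ y) (φ x) x := by
  filter_upwards [IsUnifLocDoublingMeasure.ae_tendsto_average_norm_sub
    (μ := volume) hφ.locallyIntegrable 1] with x hx
  have hA : Tendsto (fun y : ℝ => ⨍ t in closedBall x |y - x|, ‖φ t - φ x‖) (𝓝[≠] x) (𝓝 0) := by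
    refine hx (fun _ => x) (fun y => |y - x|) ?_ ?_
    · rw [tendsto_nhdsWithin_iff]
      constructor
      · have : Tendsto (fun y : ℝ => |y - x|) (𝓝 x) (𝓝 |x - x|) :=
          ((continuous_id.sub continuous_const).abs).continuousAt
        simpa using this.mono_left nhdsWithin_le_nhds
      · filter_upwards [self_mem_nhdsWithin] with y hy
        exact abs_pos.2 (sub_ne_zero.2 hy)
    · filter_upwards with y
      simp [mem_closedBall, abs_nonneg]
  rw [hasDerivAt_iff_isLittleO]
  rw [Asymptotics.isLittleO_iff]
  intro c hc
  rw [← nhdsNE_sup_pure x, eventually_sup]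
  constructor
  · have hbound : ∀ y : ℝ, y ≠ x →
        ‖(∫ t in Set.Iic y, φ t) - (∫ t in Set.Iic x, φ t) - (y - x) • φ x‖
          ≤ 2 * |y - x| * ⨍ t in closedBall x |y - x|, ‖φ t - φ x‖ := by
      intro y hy
      have h1 : (∫ t in Set.Iic y, φ t) - (∫ t in Set.Iic x, φ t) = ∫ t in x..y, φ t :=
        intervalIntegral.integral_Iic_sub_Iic hφ.integrableOn hφ.integrableOn
      have h2 : (y - x) • φ x = ∫ t in x..y, φ x := by
        rw [intervalIntegral.integral_const]
      rw [h1, h2, ← intervalIntegral.integral_sub hφ.intervalIntegrable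
        (intervalIntegrable_const)]
      have h3 : ‖∫ t in x..y, (φ t - φ x)‖ ≤ ∫ t in Set.uIoc x y, ‖φ t - φ x‖ :=
        intervalIntegral.norm_integral_le_integral_norm_uIoc
      have hsub : Set.uIoc x y ⊆ closedBall x |y - x| := by
        intro t htm
        rw [Set.mem_uIoc] at htm
        rw [mem_closedBall, Real.dist_eq]
        rcases htm with ⟨h4, h5⟩ | ⟨h4, h5⟩
        · rw [abs_of_pos (by linarith), abs_of_nonneg (by linarith)]; linarith
        · rw [abs_of_nonpos (by linarith), abs_of_neg (by linarith)]; linarith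
      have hint2 : IntegrableOn (fun t => ‖φ t - φ x‖) (closedBall x |y - x|) :=
        (hφ.integrableOn.sub (integrableOn_const measure_closedBall_lt_top.ne)).norm
      have h4 : ∫ t in Set.uIoc x y, ‖φ t - φ x‖
          ≤ ∫ t in closedBall x |y - x|, ‖φ t - φ x‖ := by
        apply setIntegral_mono_set hint2 (ae_of_all _ fun t => norm_nonneg _)
        exact HasSubset.Subset.eventuallyLE hsub
      have h5 : ∫ t in closedBall x |y - x|, ‖φ t - φ x‖
          = 2 * |y - x| * ⨍ t in closedBall x |y - x|, ‖φ t - φ x‖ := by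
        rw [setAverage_eq, Real.volume_real_closedBall (by positivity), smul_eq_mul]
        rw [← mul_assoc, mul_inv_cancel₀ (by
          have := abs_pos.2 (sub_ne_zero.2 hy); positivity), one_mul]
      linarith [h3.trans h4, h5.le, h5.ge]
    filter_upwards [hA.eventually_le_const (show (0:ℝ) < c/2 by linarith),
      self_mem_nhdsWithin] with y hy hymem
    calc ‖(∫ t in Set.Iic y, φ t) - (∫ t in Set.Iic x, φ t) - (y - x) • φ x‖
        ≤ 2 * |y - x| * ⨍ t in closedBall x |y - x|, ‖φ t - φ x‖ := hbound y hymem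
      _ ≤ 2 * |y - x| * (c/2) := by
          apply mul_le_mul_of_nonneg_left hy (by positivity)
      _ = c * ‖y - x‖ := by rw [Real.norm_eq_abs]; ring
  · simp [Filter.eventually_pure, norm_nonneg, mul_nonneg hc.le (norm_nonneg _)]

lemma gaussian_integral_eq (h : ℝ → ℝ) :
    ∫ y, h y ∂(gaussianReal 0 1)
      = (Real.sqrt (2 * π))⁻¹ * ∫ y, h y * Real.exp (-y ^ 2 / 2) := by
  rw [gaussianReal_of_var_ne_zero 0 one_ne_zero]
  have hmeas : Measurable fun y => (gaussianPDFReal 0 1 y).toNNReal :=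
    (measurable_gaussianPDFReal 0 1).real_toNNReal
  have hpdf : (gaussianPDF 0 1) = fun y => ((gaussianPDFReal 0 1 y).toNNReal : ℝ≥0∞) := by
    funext y
    simp [gaussianPDF, ENNReal.ofReal]
  rw [hpdf, integral_withDensity_eq_integral_smul hmeas]
  rw [← integral_const_mul]
  congr 1 with y
  rw [NNReal.smul_def, smul_eq_mul, Real.coe_toNNReal _ (gaussianPDFReal_nonneg 0 1 y)]
  rw [gaussianPDFReal]
  push_cast
  rw [mul_one]
  ring_nf

end SteinAux

/-- The solution of Stein's equation associated with a measurable `h` bounded by 1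
is the unique bounded solution, and satisfies `‖f‖_∞ ≤ √(2π)` and `‖f'‖_∞ ≤ 4`. -/
theorem stein_equation_solution_bounds
    (h : ℝ → ℝ) (hmeas : Measurable h) (hbd : ∀ x, |h x| ≤ 1)
    (Eh : ℝ) (hEh : Eh = ∫ y, h y ∂(gaussianReal 0 1))
    (f : ℝ → ℝ)
    (hf : ∀ x, f x = Real.exp (x ^ 2 / 2) *
      ∫ y in Set.Iic x, (h y - Eh) * Real.exp (-y ^ 2 / 2)) :
    (∀ x, |f x| ≤ Real.sqrt (2 * π)) ∧
    (∀ᵐ x ∂(volume : Measure ℝ),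
      ∃ d : ℝ, HasDerivAt f d x ∧ d - x * f x = h x - Eh ∧ |d| ≤ 4) ∧
    (∀ g : ℝ → ℝ, (∃ C : ℝ, ∀ x, |g x| ≤ C) →
      (∀ x, HasDerivAt g (h x - Eh + x * g x) x) → g = f) := by
  set φ : ℝ → ℝ := fun y => (h y - Eh) * Real.exp (-y ^ 2 / 2) with hφdef
  set F : ℝ → ℝ := fun x => ∫ y in Set.Iic x, φ y with hFdef
  have hfF : ∀ x, f x = Real.exp (x ^ 2 / 2) * F x := hf
  have sqrt2pi_pos : 0 < Real.sqrt (2 * π) := Real.sqrt_pos.2 (by positivity)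
  have habsint : ∀ (μ : Measure ℝ) (u : ℝ → ℝ), |∫ y, u y ∂μ| ≤ ∫ y, |u y| ∂μ := by
    intro μ u
    simpa [Real.norm_eq_abs] using norm_integral_le_integral_norm (μ := μ) u
  -- |Eh| ≤ 1
  have hEh1 : |Eh| ≤ 1 := by
    have hint : Integrable h (gaussianReal 0 1) := by
      refine Integrable.mono' (integrable_const 1) hmeas.aestronglyMeasurable ?_
      exact ae_of_all _ fun x => by simpa using hbd x
    rw [hEh]
    calc |∫ y, h y ∂(gaussianReal 0 1)| ≤ ∫ y, |h y| ∂(gaussianReal 0 1) :=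
          habsint _ _
      _ ≤ ∫ _y, (1 : ℝ) ∂(gaussianReal 0 1) :=
          integral_mono hint.abs (integrable_const 1) hbd
      _ = 1 := by simp
  have hφbd : ∀ y, |φ y| ≤ 2 * Real.exp (-y ^ 2 / 2) := by
    intro y
    rw [hφdef, abs_mul, abs_of_pos (Real.exp_pos _)]
    have : |h y - Eh| ≤ 2 := by
      calc |h y - Eh| ≤ |h y| + |Eh| := abs_sub _ _
        _ ≤ 2 := by linarith [hbd y]
    nlinarith [Real.exp_pos (-y ^ 2 / 2)]
  have hφmeas : Measurable φ := by
    apply (hmeas.sub measurable_const).mul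
    exact (measurable_id.pow_const 2).neg.div_const 2 |>.exp
  have hφint : Integrable φ := by
    refine Integrable.mono' (gauss_integrable.const_mul 2)
      hφmeas.aestronglyMeasurable (ae_of_all _ fun y => ?_)
    simpa using hφbd y
  -- total integral of φ is 0
  have htotal : ∫ y, φ y = 0 := by
    have hhψ : Integrable (fun y => h y * Real.exp (-y ^ 2 / 2)) := by
      refine Integrable.mono' gauss_integrable
        (hmeas.mul ((measurable_id.pow_const 2).neg.div_const 2).exp).aestronglyMeasurable
        (ae_of_all _ fun y => ?_)
      rw [Real.norm_eq_abs, abs_mul, abs_of_pos (Real.exp_pos _)]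
      nlinarith [hbd y, Real.exp_pos (-y ^ 2 / 2), abs_nonneg (h y)]
    have h1 : ∫ y, φ y = (∫ y, h y * Real.exp (-y ^ 2 / 2))
        - Eh * ∫ y, Real.exp (-y ^ 2 / 2) := by
      rw [hφdef, ← integral_const_mul, ← integral_sub hhψ (gauss_integrable.const_mul Eh)]
      congr 1 with y
      ring
    have h2 : ∫ y, h y * Real.exp (-y ^ 2 / 2) = Real.sqrt (2 * π) * Eh := by
      have := gaussian_integral_eq h
      rw [← hEh] at this
      field_simp at this ⊢
      linarith
    rw [h1, h2, gauss_integral]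
    ring
  have hF_Ioi : ∀ x, F x = -∫ y in Set.Ioi x, φ y := by
    intro x
    have := integral_add_compl (measurableSet_Iic (a := x)) hφint
    rw [Set.compl_Iic, htotal] at this
    rw [hFdef]
    simp only []
    linarith [this]
  -- reflection for Iic integrals of the gaussian
  have hreflect : ∀ x : ℝ, ∫ y in Set.Iic x, Real.exp (-y ^ 2 / 2)
      = ∫ y in Set.Ioi (-x), Real.exp (-y ^ 2 / 2) := by
    intro x
    have := integral_comp_neg_Ioi (-x) (fun y => Real.exp (-y ^ 2 / 2))
    rw [neg_neg] at this
    rw [← this]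
    congr 1 with y
    ring_nf
  -- bounds on F
  have habsF : ∀ x, |F x| ≤ Real.sqrt (2 * π) * Real.exp (-x ^ 2 / 2) ∧
      |x| * |F x| ≤ 2 * Real.exp (-x ^ 2 / 2) := by
    intro x
    rcases le_or_gt 0 x with hx | hx
    · have hF2 : |F x| ≤ 2 * ∫ y in Set.Ioi x, Real.exp (-y ^ 2 / 2) := by
        rw [hF_Ioi x, abs_neg]
        calc |∫ y in Set.Ioi x, φ y| ≤ ∫ y in Set.Ioi x, |φ y| := habsint _ _
          _ ≤ ∫ y in Set.Ioi x, 2 * Real.exp (-y ^ 2 / 2) := by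
              refine integral_mono hφint.abs.integrableOn
                ((gauss_integrable.const_mul 2).integrableOn) fun y => hφbd y
          _ = 2 * ∫ y in Set.Ioi x, Real.exp (-y ^ 2 / 2) := integral_const_mul 2 _
      constructor
      · calc |F x| ≤ 2 * ∫ y in Set.Ioi x, Real.exp (-y ^ 2 / 2) := hF2
          _ ≤ 2 * (Real.sqrt (2 * π) / 2 * Real.exp (-x ^ 2 / 2)) := by
              linarith [gauss_tail_le hx]
          _ = Real.sqrt (2 * π) * Real.exp (-x ^ 2 / 2) := by ring
      · have htail : (0 : ℝ) ≤ ∫ y in Set.Ioi x, Real.exp (-y ^ 2 / 2) :=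
          setIntegral_nonneg measurableSet_Ioi fun y _ => (Real.exp_pos _).le
        calc |x| * |F x| ≤ x * (2 * ∫ y in Set.Ioi x, Real.exp (-y ^ 2 / 2)) := by
              rw [abs_of_nonneg hx]
              exact mul_le_mul_of_nonneg_left hF2 hx
          _ = 2 * (x * ∫ y in Set.Ioi x, Real.exp (-y ^ 2 / 2)) := by ring
          _ ≤ 2 * Real.exp (-x ^ 2 / 2) := by linarith [gauss_tail_mul_le hx]
    · have hF2 : |F x| ≤ 2 * ∫ y in Set.Ioi (-x), Real.exp (-y ^ 2 / 2) := by
        rw [← hreflect x]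
        calc |F x| ≤ ∫ y in Set.Iic x, |φ y| := habsint _ _
          _ ≤ ∫ y in Set.Iic x, 2 * Real.exp (-y ^ 2 / 2) := by
              refine integral_mono hφint.abs.integrableOn
                ((gauss_integrable.const_mul 2).integrableOn) fun y => hφbd y
          _ = 2 * ∫ y in Set.Iic x, Real.exp (-y ^ 2 / 2) := integral_const_mul 2 _
      have hxneg : (0:ℝ) ≤ -x := by linarith
      have hsq : (-x) ^ 2 = x ^ 2 := by ring
      constructor
      · calc |F x| ≤ 2 * ∫ y in Set.Ioi (-x), Real.exp (-y ^ 2 / 2) := hF2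
          _ ≤ 2 * (Real.sqrt (2 * π) / 2 * Real.exp (-(-x) ^ 2 / 2)) := by
              linarith [gauss_tail_le hxneg]
          _ = Real.sqrt (2 * π) * Real.exp (-x ^ 2 / 2) := by rw [hsq]; ring
      · calc |x| * |F x| ≤ (-x) * (2 * ∫ y in Set.Ioi (-x), Real.exp (-y ^ 2 / 2)) := by
              rw [abs_of_neg hx]
              exact mul_le_mul_of_nonneg_left hF2 hxneg
          _ = 2 * ((-x) * ∫ y in Set.Ioi (-x), Real.exp (-y ^ 2 / 2)) := by ring
          _ ≤ 2 * Real.exp (-(-x) ^ 2 / 2) := by linarith [gauss_tail_mul_le hxneg]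
          _ = 2 * Real.exp (-x ^ 2 / 2) := by rw [hsq]
  have hexpmul : ∀ x : ℝ, Real.exp (x ^ 2 / 2) * Real.exp (-x ^ 2 / 2) = 1 := by
    intro x
    rw [← Real.exp_add]
    ring_nf
    exact Real.exp_zero
  have hfbound : ∀ x, |f x| ≤ Real.sqrt (2 * π) := by
    intro x
    rw [hfF x, abs_mul, abs_of_pos (Real.exp_pos _)]
    calc Real.exp (x ^ 2 / 2) * |F x|
        ≤ Real.exp (x ^ 2 / 2) * (Real.sqrt (2 * π) * Real.exp (-x ^ 2 / 2)) :=
          mul_le_mul_of_nonneg_left (habsF x).1 (Real.exp_pos _).le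
      _ = Real.sqrt (2 * π) * (Real.exp (x ^ 2 / 2) * Real.exp (-x ^ 2 / 2)) := by ring
      _ = Real.sqrt (2 * π) := by rw [hexpmul]; ring
  have hxf : ∀ x, |x * f x| ≤ 2 := by
    intro x
    rw [hfF x, show x * (Real.exp (x ^ 2 / 2) * F x)
      = Real.exp (x ^ 2 / 2) * (x * F x) by ring,
      abs_mul, abs_of_pos (Real.exp_pos _), abs_mul]
    calc Real.exp (x ^ 2 / 2) * (|x| * |F x|)
        ≤ Real.exp (x ^ 2 / 2) * (2 * Real.exp (-x ^ 2 / 2)) :=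
          mul_le_mul_of_nonneg_left (habsF x).2 (Real.exp_pos _).le
      _ = 2 * (Real.exp (x ^ 2 / 2) * Real.exp (-x ^ 2 / 2)) := by ring
      _ = 2 := by rw [hexpmul]; ring
  have hfeq : f = fun x => Real.exp (x ^ 2 / 2) * F x := funext hfF
  refine ⟨hfbound, ?_, ?_⟩
  · -- a.e. differentiability
    filter_upwards [ftc_ae φ hφint] with x hx
    refine ⟨h x - Eh + x * f x, ?_, by ring, ?_⟩
    · have h1 : HasDerivAt (fun x : ℝ => x ^ 2 / 2) x x := by
        have := (hasDerivAt_pow 2 x).div_const 2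
        simpa using this.congr_deriv (by ring)
      have h2 : HasDerivAt (fun x : ℝ => Real.exp (x ^ 2 / 2))
          (Real.exp (x ^ 2 / 2) * x) x := h1.exp
      have hphi : Real.exp (x ^ 2 / 2) * φ x = h x - Eh := by
        have h5 : φ x = (h x - Eh) * Real.exp (-x ^ 2 / 2) := rfl
        rw [h5]
        linear_combination (h x - Eh) * hexpmul x
      have hder : HasDerivAt (fun x => Real.exp (x ^ 2 / 2) * F x)
          (h x - Eh + x * f x) x := by
        have h3 := h2.mul hx
        refine h3.congr_deriv ?_
        have hFx : (∫ y in Set.Iic x, φ y) = F x := rfl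
        rw [hFx, hfF x]
        linear_combination hphi
      exact hder.congr_of_eventuallyEq (Filter.Eventually.of_forall hfF)
    · have h4 : |h x - Eh| ≤ 2 := by
        calc |h x - Eh| ≤ |h x| + |Eh| := abs_sub _ _
          _ ≤ 2 := by linarith [hbd x]
      calc |h x - Eh + x * f x| ≤ |h x - Eh| + |x * f x| := abs_add_le _ _
        _ ≤ 4 := by linarith [hxf x]
  · -- uniqueness
    rintro g ⟨C, hC⟩ hg
    set G : ℝ → ℝ := fun x => Real.exp (-x ^ 2 / 2) * g x with hGdef
    have hG : ∀ x, HasDerivAt G (φ x) x := by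
      intro x
      have h1 : HasDerivAt (fun x : ℝ => -x ^ 2 / 2) (-x) x := by
        have := ((hasDerivAt_pow 2 x).neg).div_const 2
        simpa using this.congr_deriv (by ring)
      have h2 : HasDerivAt (fun x : ℝ => Real.exp (-x ^ 2 / 2))
          (Real.exp (-x ^ 2 / 2) * (-x)) x := h1.exp
      have h3 := h2.mul (hg x)
      refine h3.congr_deriv ?_
      show _ = (h x - Eh) * Real.exp (-x ^ 2 / 2)
      ring
    have hGF : ∀ a x : ℝ, G x - G a = F x - F a := by
      intro a x
      have h1 : ∫ t in a..x, φ t = G x - G a :=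
        intervalIntegral.integral_eq_sub_of_hasDerivAt (fun t _ => hG t)
          hφint.intervalIntegrable
      have h2 : F x - F a = ∫ t in a..x, φ t :=
        intervalIntegral.integral_Iic_sub_Iic hφint.integrableOn hφint.integrableOn
      rw [h2, h1]
    funext x
    have key : ∀ n : ℕ, G x - F x = G (-(n:ℝ)) - F (-(n:ℝ)) := by
      intro n
      have := hGF (-(n:ℝ)) x
      linarith
    have hexp0 : Tendsto (fun n : ℕ => Real.exp (-(n:ℝ) ^ 2 / 2)) atTop (𝓝 0) := by
      have h1 : Tendsto (fun n : ℕ => (n:ℝ) ^ 2 / 2) atTop atTop := by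
        apply Tendsto.atTop_div_const (by norm_num : (0:ℝ) < 2)
        exact (tendsto_pow_atTop (by norm_num)).comp tendsto_natCast_atTop_atTop
      have := Real.tendsto_exp_neg_atTop_nhds_zero.comp h1
      refine this.congr fun n => ?_
      simp [Function.comp, neg_div]
    have hbound : ∀ n : ℕ, ‖G (-(n:ℝ)) - F (-(n:ℝ))‖
        ≤ (C + Real.sqrt (2 * π)) * Real.exp (-(n:ℝ) ^ 2 / 2) := by
      intro n
      have hg1 : |G (-(n:ℝ))| ≤ Real.exp (-(-(n:ℝ)) ^ 2 / 2) * C := by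
        have hGn : G (-(n:ℝ)) = Real.exp (-(-(n:ℝ)) ^ 2 / 2) * g (-(n:ℝ)) := rfl
        rw [hGn, abs_mul, abs_of_pos (Real.exp_pos _)]
        exact mul_le_mul_of_nonneg_left (hC _) (Real.exp_pos _).le
      have hf1 : |F (-(n:ℝ))| ≤ Real.sqrt (2 * π) * Real.exp (-(-(n:ℝ)) ^ 2 / 2) :=
        (habsF _).1
      have hsq : (-(n:ℝ)) ^ 2 = (n:ℝ) ^ 2 := by ring
      rw [hsq] at hg1 hf1
      rw [Real.norm_eq_abs]
      calc |G (-(n:ℝ)) - F (-(n:ℝ))| ≤ |G (-(n:ℝ))| + |F (-(n:ℝ))| := abs_sub _ _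
        _ ≤ (C + Real.sqrt (2 * π)) * Real.exp (-(n:ℝ) ^ 2 / 2) := by nlinarith
    have htend : Tendsto (fun n : ℕ => G (-(n:ℝ)) - F (-(n:ℝ))) atTop (𝓝 0) := by
      refine squeeze_zero_norm hbound ?_
      have := hexp0.const_mul (C + Real.sqrt (2 * π))
      simpa using this
    have hconst : Tendsto (fun _ : ℕ => G x - F x) atTop (𝓝 (G x - F x)) :=
      tendsto_const_nhds
    have : G x - F x = 0 := by
      have h5 : Tendsto (fun n : ℕ => G (-(n:ℝ)) - F (-(n:ℝ))) atTop (𝓝 (G x - F x)) := by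
        refine hconst.congr fun n => key n
      exact tendsto_nhds_unique h5 htend
    have hGx : G x = F x := by linarith
    have : Real.exp (-x ^ 2 / 2) * g x = F x := hGx
    rw [hfF x, ← this]
    linear_combination (-(g x)) * hexpmul x
end

section
/- Let X be a real random variable with mean zero, finite variance, density p supported on a connected interval, and Stein kernel τ. Then for any constant b > 0, E[(b ∧ |X|) τ(X)] ≤ E[|X|² (b ∧ |X|)]. -/
open MeasureTheory ProbabilityTheory Real Filter
open scoped ENNReal NNReal Topology


lemma steinAux_H_meas (μ : Measure ℝ) (hy : Integrable (fun y : ℝ => y) μ) :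
    Measurable (fun x => ∫ y in Set.Ioi x, y ∂μ) := by
  have i1 : Integrable (fun y : ℝ => max y 0) μ := hy.pos_part
  have i2 : Integrable (fun y : ℝ => max (-y) 0) μ := by
    have := hy.neg.pos_part
    simpa using this
  have h1 : Antitone (fun x => ∫ y in Set.Ioi x, max y 0 ∂μ) := by
    intro a c hac
    exact setIntegral_mono_set i1.integrableOn
      ((ae_restrict_mem measurableSet_Ioi).mono fun y _ => le_max_right _ _)
      (HasSubset.Subset.eventuallyLE (Set.Ioi_subset_Ioi hac))
  have h2 : Antitone (fun x => ∫ y in Set.Ioi x, max (-y) 0 ∂μ) := by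
    intro a c hac
    exact setIntegral_mono_set i2.integrableOn
      ((ae_restrict_mem measurableSet_Ioi).mono fun y _ => le_max_right _ _)
      (HasSubset.Subset.eventuallyLE (Set.Ioi_subset_Ioi hac))
  have heq : (fun x => ∫ y in Set.Ioi x, y ∂μ)
      = fun x => (∫ y in Set.Ioi x, max y 0 ∂μ) - ∫ y in Set.Ioi x, max (-y) 0 ∂μ := by
    funext x
    rw [← integral_sub i1.integrableOn i2.integrableOn]
    congr 1
    funext y
    rcases le_total y 0 with h | h
    · simp [max_eq_right h, max_eq_left (neg_nonneg.mpr h)]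
    · simp [max_eq_left h, max_eq_right (neg_nonpos.mpr h)]
  rw [heq]
  exact (h1.measurable).sub (h2.measurable)

lemma steinAux_H_neg (μ : Measure ℝ) (hy : Integrable (fun y : ℝ => y) μ)
    (hmean : ∫ y, y ∂μ = 0) (x : ℝ) :
    ∫ y in Set.Ioi x, y ∂μ = ∫ y in Set.Iic x, -y ∂μ := by
  have h := integral_add_compl (measurableSet_Iic (a := x)) hy
  rw [Set.compl_Iic, hmean] at h
  rw [integral_neg]
  linarith

lemma steinAux_H_nonneg (μ : Measure ℝ) (hy : Integrable (fun y : ℝ => y) μ)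
    (hmean : ∫ y, y ∂μ = 0) (x : ℝ) :
    0 ≤ ∫ y in Set.Ioi x, y ∂μ := by
  rcases le_or_gt 0 x with hx | hx
  · exact setIntegral_nonneg measurableSet_Ioi fun y h => le_trans hx h.le
  · rw [steinAux_H_neg μ hy hmean x]
    exact setIntegral_nonneg measurableSet_Iic fun y h => by
      simp only [Set.mem_Iic] at h; linarith


lemma steinAux_H_neg' (μ : Measure ℝ) (hy : Integrable (fun y : ℝ => y) μ)
    (hmean : ∫ y, y ∂μ = 0) (x : ℝ) :
    ∫ y in Set.Ioi x, y ∂μ = ∫ y in Set.Iic x, -y ∂μ := by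
  have h := integral_add_compl (measurableSet_Iic (a := x)) hy
  rw [Set.compl_Iic, hmean] at h
  rw [integral_neg]
  linarith

lemma steinAux_core (μ : Measure ℝ) [IsProbabilityMeasure μ]
    (hy : Integrable (fun y : ℝ => y) μ) (hmean : ∫ y, y ∂μ = 0)
    (b : ℝ) (hb : 0 < b) :
    ∫⁻ x, ENNReal.ofReal (min b |x| * ∫ y in Set.Ioi x, y ∂μ)
      ≤ ∫⁻ y, ENNReal.ofReal (y ^ 2 * min b |y|) ∂μ := by
  set w : ℝ → ℝ := fun x => min b |x| with hwdef
  have hwnn : ∀ x, 0 ≤ w x := fun x => le_min hb.le (abs_nonneg x)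
  set H : ℝ → ℝ := fun x => ∫ y in Set.Ioi x, y ∂μ with hHdef
  -- split the left integral at 0
  rw [← lintegral_add_compl (fun x => ENNReal.ofReal (w x * H x)) (measurableSet_Ici (a := (0:ℝ))),
    Set.compl_Ici]
  -- positive part
  have Lplus : ∫⁻ x in Set.Ici (0:ℝ), ENNReal.ofReal (w x * H x)
      ≤ ∫⁻ y in Set.Ioi (0:ℝ), ENNReal.ofReal (y ^ 2 * w y) ∂μ := by
    set Φ : ℝ → ℝ → ℝ≥0∞ :=
      fun x y => (Set.Ioi x).indicator (fun y => ENNReal.ofReal (w x) * ENNReal.ofReal y) y with hΦdef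
    have step1 : ∫⁻ x in Set.Ici (0:ℝ), ENNReal.ofReal (w x * H x)
        = ∫⁻ x in Set.Ici (0:ℝ), ∫⁻ y, Φ x y ∂μ := by
      refine setLIntegral_congr_fun measurableSet_Ici (fun x hx => ?_)
      have hHx : ENNReal.ofReal (H x) = ∫⁻ y in Set.Ioi x, ENNReal.ofReal y ∂μ := by
        refine ofReal_integral_eq_lintegral_ofReal hy.integrableOn ?_
        exact (ae_restrict_mem measurableSet_Ioi).mono fun y hy => le_trans hx (le_of_lt hy)
      rw [ENNReal.ofReal_mul (hwnn x), hHx, ← lintegral_const_mul' _ _ ENNReal.ofReal_ne_top,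
        ← lintegral_indicator measurableSet_Ioi]
    rw [step1]
    have hmeasΦ : AEMeasurable (Function.uncurry Φ)
        ((volume.restrict (Set.Ici (0:ℝ))).prod μ) := by
      have : Function.uncurry Φ = fun q : ℝ × ℝ =>
          Set.indicator {q : ℝ × ℝ | q.1 < q.2}
            (fun q => ENNReal.ofReal (w q.1) * ENNReal.ofReal q.2) q := by
        funext q
        by_cases h : q.1 < q.2 <;>
          simp [Function.uncurry, Φ, Set.indicator, h, Set.mem_Ioi]
      rw [this]
      refine (Measurable.indicator ?_ (measurableSet_lt measurable_fst measurable_snd)).aemeasurable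
      exact ((ENNReal.measurable_ofReal.comp
        ((measurable_const.min measurable_id.abs).comp measurable_fst)).mul
        (ENNReal.measurable_ofReal.comp measurable_snd))
    rw [lintegral_lintegral_swap hmeasΦ]
    have key : ∀ y : ℝ, (∫⁻ x in Set.Ici (0:ℝ), Φ x y)
        ≤ (Set.Ioi (0:ℝ)).indicator (fun y => ENNReal.ofReal (y ^ 2 * w y)) y := by
      intro y
      by_cases hy0 : 0 < y
      · rw [Set.indicator_of_mem (Set.mem_Ioi.mpr hy0)]
        calc ∫⁻ x in Set.Ici (0:ℝ), Φ x y
            ≤ ∫⁻ x in Set.Ici (0:ℝ),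
                (Set.Ico 0 y).indicator
                  (fun _ => ENNReal.ofReal (w y) * ENNReal.ofReal y) x := by
              refine lintegral_mono_ae ((ae_restrict_mem measurableSet_Ici).mono fun x hx => ?_)
              by_cases hxy : x < y
              · have hx' : x ∈ Set.Ico 0 y := ⟨hx, hxy⟩
                simp only [hΦdef]
                rw [Set.indicator_of_mem (Set.mem_Ioi.mpr hxy), Set.indicator_of_mem hx']
                refine mul_le_mul_left (ENNReal.ofReal_le_ofReal ?_) _
                exact min_le_min le_rfl (by rw [abs_of_nonneg hx, abs_of_pos hy0]; exact hxy.le)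
              · simp [Φ, Set.mem_Ioi, hxy]
          _ ≤ ∫⁻ x, (Set.Ico 0 y).indicator
                (fun _ => ENNReal.ofReal (w y) * ENNReal.ofReal y) x :=
              lintegral_mono' Measure.restrict_le_self le_rfl
          _ = (ENNReal.ofReal (w y) * ENNReal.ofReal y) * volume (Set.Ico 0 y) :=
              lintegral_indicator_const measurableSet_Ico _
          _ = ENNReal.ofReal (y ^ 2 * w y) := by
              rw [Real.volume_Ico, sub_zero, ← ENNReal.ofReal_mul (hwnn y),
                ← ENNReal.ofReal_mul (mul_nonneg (hwnn y) hy0.le)]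
              congr 1
              ring
      · have hz : ∀ᵐ x ∂(volume.restrict (Set.Ici (0:ℝ))), Φ x y = 0 :=
          (ae_restrict_mem measurableSet_Ici).mono fun x hx => by
            simp only [Set.mem_Ici] at hx
            have : ¬ x < y := by push_neg at hy0; linarith
            simp [Φ, Set.mem_Ioi, this]
        rw [lintegral_congr_ae hz, lintegral_zero]
        exact zero_le
    calc ∫⁻ y, (∫⁻ x in Set.Ici (0:ℝ), Φ x y) ∂μ
        ≤ ∫⁻ y, (Set.Ioi (0:ℝ)).indicator (fun y => ENNReal.ofReal (y ^ 2 * w y)) y ∂μ :=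
          lintegral_mono key
      _ = ∫⁻ y in Set.Ioi (0:ℝ), ENNReal.ofReal (y ^ 2 * w y) ∂μ :=
          lintegral_indicator measurableSet_Ioi _
  -- negative part
  have Lminus : ∫⁻ x in Set.Iio (0:ℝ), ENNReal.ofReal (w x * H x)
      ≤ ∫⁻ y in Set.Iio (0:ℝ), ENNReal.ofReal (y ^ 2 * w y) ∂μ := by
    set Ψ : ℝ → ℝ → ℝ≥0∞ :=
      fun x y => (Set.Iic x).indicator (fun y => ENNReal.ofReal (w x) * ENNReal.ofReal (-y)) y
      with hΨdef
    have hyneg : Integrable (fun y : ℝ => -y) μ := hy.neg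
    have step1 : ∫⁻ x in Set.Iio (0:ℝ), ENNReal.ofReal (w x * H x)
        = ∫⁻ x in Set.Iio (0:ℝ), ∫⁻ y, Ψ x y ∂μ := by
      refine setLIntegral_congr_fun measurableSet_Iio (fun x hx => ?_)
      have hHx : ENNReal.ofReal (H x) = ∫⁻ y in Set.Iic x, ENNReal.ofReal (-y) ∂μ := by
        rw [hHdef]
        simp only []
        rw [steinAux_H_neg' μ hy hmean x]
        refine ofReal_integral_eq_lintegral_ofReal hyneg.integrableOn ?_
        refine (ae_restrict_mem measurableSet_Iic).mono fun y hy => ?_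
        simp only [Set.mem_Iic] at hy
        simp only [Set.mem_Iio] at hx
        show (0:ℝ) ≤ -y
        linarith
      rw [ENNReal.ofReal_mul (hwnn x), hHx, ← lintegral_const_mul' _ _ ENNReal.ofReal_ne_top,
        ← lintegral_indicator measurableSet_Iic]
    rw [step1]
    have hmeasΨ : AEMeasurable (Function.uncurry Ψ)
        ((volume.restrict (Set.Iio (0:ℝ))).prod μ) := by
      have : Function.uncurry Ψ = fun q : ℝ × ℝ =>
          Set.indicator {q : ℝ × ℝ | q.2 ≤ q.1}
            (fun q => ENNReal.ofReal (w q.1) * ENNReal.ofReal (-q.2)) q := by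
        funext q
        by_cases h : q.2 ≤ q.1 <;>
          simp [Function.uncurry, Ψ, Set.indicator, h, Set.mem_Iic]
      rw [this]
      refine (Measurable.indicator ?_ (measurableSet_le measurable_snd measurable_fst)).aemeasurable
      exact ((ENNReal.measurable_ofReal.comp
        ((measurable_const.min measurable_id.abs).comp measurable_fst)).mul
        (ENNReal.measurable_ofReal.comp measurable_snd.neg))
    rw [lintegral_lintegral_swap hmeasΨ]
    have key : ∀ y : ℝ, (∫⁻ x in Set.Iio (0:ℝ), Ψ x y)
        ≤ (Set.Iio (0:ℝ)).indicator (fun y => ENNReal.ofReal (y ^ 2 * w y)) y := by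
      intro y
      by_cases hy0 : y < 0
      · rw [Set.indicator_of_mem (Set.mem_Iio.mpr hy0)]
        calc ∫⁻ x in Set.Iio (0:ℝ), Ψ x y
            ≤ ∫⁻ x in Set.Iio (0:ℝ),
                (Set.Ico y 0).indicator
                  (fun _ => ENNReal.ofReal (w y) * ENNReal.ofReal (-y)) x := by
              refine lintegral_mono_ae ((ae_restrict_mem measurableSet_Iio).mono fun x hx => ?_)
              simp only [Set.mem_Iio] at hx
              by_cases hxy : y ≤ x
              · have hx' : x ∈ Set.Ico y 0 := ⟨hxy, hx⟩
                simp only [hΨdef]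
                simp only [Set.indicator_of_mem (Set.mem_Iic.mpr hxy),
                  Set.indicator_of_mem hx']
                refine mul_le_mul_left (ENNReal.ofReal_le_ofReal ?_) _
                refine min_le_min le_rfl ?_
                rw [abs_of_neg hx, abs_of_neg hy0]
                linarith
              · have : y ∉ Set.Iic x := by simpa [Set.mem_Iic] using hxy
                simp [Ψ, Set.indicator_of_notMem this]
          _ ≤ ∫⁻ x, (Set.Ico y 0).indicator
                (fun _ => ENNReal.ofReal (w y) * ENNReal.ofReal (-y)) x :=
              lintegral_mono' Measure.restrict_le_self le_rfl
          _ = (ENNReal.ofReal (w y) * ENNReal.ofReal (-y)) * volume (Set.Ico y 0) :=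
              lintegral_indicator_const measurableSet_Ico _
          _ = ENNReal.ofReal (y ^ 2 * w y) := by
              rw [Real.volume_Ico, zero_sub, ← ENNReal.ofReal_mul (hwnn y),
                ← ENNReal.ofReal_mul (mul_nonneg (hwnn y) (by linarith))]
              congr 1
              ring
      · have hz : ∀ᵐ x ∂(volume.restrict (Set.Iio (0:ℝ))), Ψ x y = 0 :=
          (ae_restrict_mem measurableSet_Iio).mono fun x hx => by
            simp only [Set.mem_Iio] at hx
            have : y ∉ Set.Iic x := by simp only [Set.mem_Iic, not_le]; push_neg at hy0; linarith
            simp [Ψ, Set.indicator_of_notMem this]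
        rw [lintegral_congr_ae hz, lintegral_zero]
        exact zero_le
    calc ∫⁻ y, (∫⁻ x in Set.Iio (0:ℝ), Ψ x y) ∂μ
        ≤ ∫⁻ y, (Set.Iio (0:ℝ)).indicator (fun y => ENNReal.ofReal (y ^ 2 * w y)) y ∂μ :=
          lintegral_mono key
      _ = ∫⁻ y in Set.Iio (0:ℝ), ENNReal.ofReal (y ^ 2 * w y) ∂μ :=
          lintegral_indicator measurableSet_Iio _
  refine le_trans (add_le_add Lplus Lminus) ?_
  calc (∫⁻ y in Set.Ioi (0:ℝ), ENNReal.ofReal (y ^ 2 * w y) ∂μ)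
        + ∫⁻ y in Set.Iio (0:ℝ), ENNReal.ofReal (y ^ 2 * w y) ∂μ
      ≤ (∫⁻ y in Set.Ioi (0:ℝ), ENNReal.ofReal (y ^ 2 * w y) ∂μ)
        + ∫⁻ y in (Set.Ioi (0:ℝ))ᶜ, ENNReal.ofReal (y ^ 2 * w y) ∂μ := by
        refine add_le_add le_rfl (lintegral_mono_set ?_)
        rw [Set.compl_Ioi]
        exact Set.Iio_subset_Iic_self
    _ = ∫⁻ y, ENNReal.ofReal (y ^ 2 * w y) ∂μ :=
        lintegral_add_compl _ measurableSet_Ioi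

/-- Bound for the Stein kernel: `E[(b ∧ |X|) τ(X)] ≤ E[|X|² (b ∧ |X|)]`. -/

theorem stein_kernel_min_bound
    {Ω : Type*} [MeasureSpace Ω] [IsProbabilityMeasure (ℙ : Measure Ω)]
    (X : Ω → ℝ) (hXmeas : Measurable X)
    (hXsq : Integrable (fun ω => X ω ^ 2) ℙ)
    (hmean : ∫ ω, X ω = 0)
    (p : ℝ → ℝ) (hp : ∀ x, 0 ≤ p x)
    (hdens : Measure.map X ℙ = volume.withDensity (fun x => ENNReal.ofReal (p x)))
    (hconn : Set.OrdConnected {x | 0 < p x})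
    (τ : ℝ → ℝ)
    (hτ : ∀ x, 0 < p x →
      τ x = (∫ y in Set.Ioi x, (y - ∫ ω, X ω) * p y) / p x)
    (b : ℝ) (hb : 0 < b)
    (hint : Integrable (fun ω => min b |X ω| * τ (X ω)) ℙ) :
    ∫ ω, min b |X ω| * τ (X ω) ≤ ∫ ω, X ω ^ 2 * min b |X ω| := by
  have hXae : AEMeasurable X ℙ := hXmeas.aemeasurable
  set μ : Measure ℝ := Measure.map X ℙ with hμdef
  haveI : IsProbabilityMeasure μ := Measure.isProbabilityMeasure_map hXae
  set w : ℝ → ℝ := fun x => min b |x| with hwdef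
  have hwmeas : Measurable w := measurable_const.min measurable_id.abs
  have hwnn : ∀ x, 0 ≤ w x := fun x => le_min hb.le (abs_nonneg x)
  have hsqmeas : Measurable (fun y : ℝ => y ^ 2) := measurable_id.pow_const 2
  -- integrability transfers
  have Iy2 : Integrable (fun y : ℝ => y ^ 2) μ :=
    (integrable_map_measure hsqmeas.aestronglyMeasurable hXae).mpr hXsq
  have Ig : Integrable (fun y : ℝ => y ^ 2 + 1) μ := by
    simpa using Iy2.add (integrable_const 1)
  have Iy : Integrable (fun y : ℝ => y) μ := by
    refine Ig.mono measurable_id'.aestronglyMeasurable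
      (Filter.Eventually.of_forall fun y => ?_)
    simp only [Real.norm_eq_abs]
    rw [abs_of_nonneg (by positivity : (0:ℝ) ≤ y ^ 2 + 1)]
    nlinarith [abs_nonneg y, sq_abs y, sq_nonneg (|y| - 1)]
  have hmean' : ∫ y, y ∂μ = 0 := by
    rw [hμdef, integral_map hXae measurable_id'.aestronglyMeasurable]
    exact hmean
  -- absolute continuity and measurable density
  have hac : μ ≪ (volume : Measure ℝ) := by
    rw [hdens]; exact withDensity_absolutelyContinuous _ _
  have hatom : ∀ a : ℝ, μ {a} = 0 := fun a => hac (measure_singleton a)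
  set ρ : ℝ → ℝ≥0 := fun x => (μ.rnDeriv volume x).toNNReal with hρdef
  have hρmeas : Measurable ρ := (Measure.measurable_rnDeriv μ volume).ennreal_toNNReal
  have hμρ : μ = volume.withDensity (fun x => (ρ x : ℝ≥0∞)) := by
    conv_lhs => rw [← Measure.withDensity_rnDeriv_eq μ volume hac]
    refine withDensity_congr_ae ?_
    filter_upwards [Measure.rnDeriv_lt_top μ volume] with x hx
    exact (ENNReal.coe_toNNReal hx.ne).symm
  -- H
  set H : ℝ → ℝ := fun x => ∫ y in Set.Ioi x, y ∂μ with hHdef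
  have hHmeas : Measurable H := steinAux_H_meas μ Iy
  have hHnn : ∀ x, 0 ≤ H x := steinAux_H_nonneg μ Iy hmean'
  -- honest region U
  set U : Set ℝ := {x | IntegrableOn (fun y => y * p y) (Set.Ioi x) volume} with hUdef
  have hUup : ∀ {a c : ℝ}, a ∈ U → a ≤ c → c ∈ U :=
    fun ha hle => IntegrableOn.mono_set ha (Set.Ioi_subset_Ioi hle)
  have hUmeas : MeasurableSet U := by
    have : Set.OrdConnected U := ⟨fun a ha c _ z hz => hUup ha hz.1⟩
    exact this.measurableSet
  -- identification of the density on the honest region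
  have hident : ∀ x₀ ∈ U, p =ᵐ[volume.restrict (Set.Ioi x₀)] fun y => ((ρ y : ℝ)) := by
    intro x₀ hx₀
    set ν : Measure ℝ := volume.restrict (Set.Ioi x₀) with hνdef
    have hg : IntegrableOn (fun y => y * p y) (Set.Ioi x₀) volume := hx₀
    have ha : AEStronglyMeasurable (fun y => y * p y) ν := hg.1
    set r : ℝ → ℝ≥0 := fun y => Real.toNNReal (ha.mk _ y / y) with hrdef
    have hrmeas : Measurable r :=
      (ha.measurable_mk.div measurable_id).real_toNNReal
    have hz : ∀ᵐ y ∂ν, y ≠ (0:ℝ) := by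
      refine ae_iff.mpr ?_
      have : {y : ℝ | ¬ y ≠ 0} = {(0:ℝ)} := by ext y; simp
      rw [this]
      exact le_antisymm (le_trans (Measure.restrict_le_self _) (by simp)) zero_le
    have hpr : (fun y => ENNReal.ofReal (p y)) =ᵐ[ν] fun y => ((r y : ℝ≥0∞)) := by
      filter_upwards [ha.ae_eq_mk, hz] with y h1 h2
      have hmk : ha.mk _ y / y = p y := by
        rw [← h1]; field_simp
      simp only [hrdef, hmk]
      rfl
    have hmeq : ν.withDensity (fun y => ((r y : ℝ≥0∞))) = ν.withDensity (fun y => ((ρ y : ℝ≥0∞))) := by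
      calc ν.withDensity (fun y => ((r y : ℝ≥0∞)))
          = ν.withDensity (fun y => ENNReal.ofReal (p y)) := (withDensity_congr_ae hpr).symm
        _ = μ.restrict (Set.Ioi x₀) := by
            rw [hdens, restrict_withDensity measurableSet_Ioi]
        _ = ν.withDensity (fun y => ((ρ y : ℝ≥0∞))) := by
            rw [hμρ, restrict_withDensity measurableSet_Ioi]
    have h2 : (fun y => ((r y : ℝ≥0∞))) =ᵐ[ν] (fun y => ((ρ y : ℝ≥0∞))) := by
      refine ae_eq_of_forall_setLIntegral_eq_of_sigmaFinite
        hrmeas.coe_nnreal_ennreal hρmeas.coe_nnreal_ennreal fun s hs _ => ?_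
      rw [← withDensity_apply _ hs, ← withDensity_apply _ hs, hmeq]
    filter_upwards [h2, hpr] with y h2y hpy
    have h3 : ENNReal.ofReal (p y) = ((ρ y : ℝ≥0) : ℝ≥0∞) := hpy.trans h2y
    have := congrArg ENNReal.toReal h3
    rwa [ENNReal.toReal_ofReal (hp y), ENNReal.coe_toReal] at this
  -- computation of the kernel-numerator on the honest region
  have hhH : ∀ x ∈ U, (∫ y in Set.Ioi x, y * p y) = H x := by
    intro x hx
    have hid := hident x hx
    calc ∫ y in Set.Ioi x, y * p y
        = ∫ y in Set.Ioi x, (ρ y : ℝ≥0) • y := by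
          refine integral_congr_ae (hid.mono fun y h => ?_)
          show y * p y = (ρ y : ℝ≥0) • y
          rw [h]
          simp [NNReal.smul_def, mul_comm]
      _ = ∫ y, y ∂((volume.restrict (Set.Ioi x)).withDensity fun y => ((ρ y : ℝ≥0∞))) :=
          (integral_withDensity_eq_integral_smul hρmeas _).symm
      _ = H x := by rw [← restrict_withDensity measurableSet_Ioi, ← hμρ]
  -- G : measurable version of w * τ
  set G : ℝ → ℝ := Set.indicator U (fun x => w x * (H x / (ρ x : ℝ))) with hGdef
  have hGmeas : Measurable G :=
    Measurable.indicator (hwmeas.mul (hHmeas.div hρmeas.coe_nnreal_real)) hUmeas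
  -- a.e. facts
  have hsupp : ∀ᵐ x ∂μ, 0 < p x := by
    have hI : MeasurableSet {x : ℝ | 0 < p x} := hconn.measurableSet
    rw [ae_iff]
    have hset : {x : ℝ | ¬ 0 < p x} = {x : ℝ | 0 < p x}ᶜ := rfl
    rw [hset, hdens, withDensity_apply _ hI.compl]
    have hz : (fun x => ENNReal.ofReal (p x)) =ᵐ[volume.restrict {x : ℝ | 0 < p x}ᶜ] 0 := by
      refine (ae_restrict_mem hI.compl).mono fun x hx => ?_
      have : p x = 0 := le_antisymm (not_lt.mp hx) (hp x)
      simp [this]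
    rw [lintegral_congr_ae hz]
    simp
  have hUid : ∀ᵐ x ∂μ, x ∈ U → p x = (ρ x : ℝ) := by
    have key : ∀ q : ℚ, ∀ᵐ x ∂μ, ((q : ℝ) ∈ U → x ∈ Set.Ioi (q:ℝ) → p x = (ρ x : ℝ)) := by
      intro q
      by_cases hq : (q : ℝ) ∈ U
      · have h1 : ∀ᵐ x ∂volume, x ∈ Set.Ioi (q:ℝ) → p x = (ρ x : ℝ) :=
          (ae_restrict_iff' measurableSet_Ioi).mp (hident _ hq)
        have h2 : ∀ᵐ x ∂μ, x ∈ Set.Ioi (q:ℝ) → p x = (ρ x : ℝ) := hac.ae_le h1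
        exact h2.mono fun x hx _ => hx
      · exact Filter.Eventually.of_forall fun x hq' => absurd hq' hq
    set M : Set ℝ := {x ∈ U | ∀ q : ℚ, (q:ℝ) ∈ U → x ≤ q} with hMdef
    have hM : ∀ᵐ x ∂μ, x ∉ M := by
      rw [ae_iff]
      refine measure_mono_null (fun x hx => not_not.mp hx) ?_
      · have hsub : M.Subsingleton := by
          intro a ha c hc
          by_contra hne
          rcases lt_or_gt_of_ne hne with h | h
          · obtain ⟨q, hq1, hq2⟩ := exists_rat_btwn h
            exact absurd (hc.2 q (hUup ha.1 hq1.le)) (not_le.mpr hq2)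
          · obtain ⟨q, hq1, hq2⟩ := exists_rat_btwn h
            exact absurd (ha.2 q (hUup hc.1 hq1.le)) (not_le.mpr hq2)
        rcases hsub.eq_empty_or_singleton with h | ⟨a, h⟩
        · simp [h]
        · rw [h]; exact hatom a
    filter_upwards [ae_all_iff.mpr key, hM] with x hx hxM hxU
    by_cases hex : ∃ q : ℚ, (q:ℝ) ∈ U ∧ (q:ℝ) < x
    · obtain ⟨q, hq1, hq2⟩ := hex
      exact hx q hq1 hq2
    · push_neg at hex
      exact absurd ⟨hxU, fun q hq => hex q hq⟩ hxM
  have hae : ∀ᵐ x ∂μ, w x * τ x = G x := by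
    filter_upwards [hsupp, hUid] with x hpx hUx
    have hτx : τ x = (∫ y in Set.Ioi x, y * p y) / p x := by
      rw [hτ x hpx, hmean]
      simp only [sub_zero]
    by_cases hx : x ∈ U
    · rw [hτx, hhH x hx, hUx hx, hGdef, Set.indicator_of_mem hx]
    · rw [hτx, integral_undef hx, hGdef, Set.indicator_of_notMem hx]
      simp
  -- rewrite LHS
  have hLHS : ∫ ω, min b |X ω| * τ (X ω)
      = ∫ x, Set.indicator (U ∩ {x | ρ x ≠ 0}) (fun x => w x * H x) x := by
    have haeΩ : ∀ᵐ ω ∂ℙ, min b |X ω| * τ (X ω) = G (X ω) := ae_of_ae_map hXae hae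
    calc ∫ ω, min b |X ω| * τ (X ω)
        = ∫ ω, G (X ω) := integral_congr_ae haeΩ
      _ = ∫ x, G x ∂μ := (integral_map hXae hGmeas.aestronglyMeasurable).symm
      _ = ∫ x, (ρ x : ℝ≥0) • G x := by
          conv_lhs => rw [hμρ]
          exact integral_withDensity_eq_integral_smul hρmeas G
      _ = ∫ x, Set.indicator (U ∩ {x | ρ x ≠ 0}) (fun x => w x * H x) x := by
          refine integral_congr_ae (Filter.Eventually.of_forall fun x => ?_)
          show (ρ x : ℝ≥0) • G x = _
          by_cases hx : x ∈ U
          · by_cases h0 : ρ x = 0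
            · have hnot : x ∉ U ∩ {x | ρ x ≠ 0} := fun hc => hc.2 h0
              simp [hGdef, Set.indicator_of_mem hx, h0, Set.indicator_of_notMem hnot]
            · rw [hGdef, Set.indicator_of_mem hx, Set.indicator_of_mem (Set.mem_inter hx h0), NNReal.smul_def]
              have h0' : ((ρ x : ℝ)) ≠ 0 := by exact_mod_cast h0
              simp only [smul_eq_mul]
              field_simp
          · have hnot : x ∉ U ∩ {x | ρ x ≠ 0} := fun hc => hx hc.1
            simp [hGdef, Set.indicator_of_notMem hx, Set.indicator_of_notMem hnot]
  -- RHS transfer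
  have hRHS : ∫ ω, X ω ^ 2 * min b |X ω| = ∫ y, y ^ 2 * w y ∂μ := by
    rw [hμdef, integral_map (f := fun y : ℝ => y ^ 2 * w y) hXae (hsqmeas.mul hwmeas).aestronglyMeasurable]
  -- conclude via the core estimate
  rw [hLHS, hRHS]
  have hSmeas : MeasurableSet (U ∩ {x | ρ x ≠ 0}) :=
    hUmeas.inter ((hρmeas (measurableSet_singleton 0)).compl)
  have hindnn : ∀ x, 0 ≤ Set.indicator (U ∩ {x | ρ x ≠ 0}) (fun x => w x * H x) x :=
    fun x => Set.indicator_nonneg (fun y _ => mul_nonneg (hwnn y) (hHnn y)) x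
  have hindmeas : Measurable (Set.indicator (U ∩ {x | ρ x ≠ 0}) (fun x => w x * H x)) :=
    (hwmeas.mul hHmeas).indicator hSmeas
  have lhs_eq : ∫ x, Set.indicator (U ∩ {x | ρ x ≠ 0}) (fun x => w x * H x) x
      = (∫⁻ x, ENNReal.ofReal (Set.indicator (U ∩ {x | ρ x ≠ 0}) (fun x => w x * H x) x)).toReal :=
    integral_eq_lintegral_of_nonneg_ae (Filter.Eventually.of_forall hindnn)
      hindmeas.aestronglyMeasurable
  have h1 : (∫⁻ x, ENNReal.ofReal (Set.indicator (U ∩ {x | ρ x ≠ 0}) (fun x => w x * H x) x))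
      ≤ ∫⁻ x, ENNReal.ofReal (w x * H x) :=
    lintegral_mono fun x => ENNReal.ofReal_le_ofReal
      (Set.indicator_le_self' (fun y _ => mul_nonneg (hwnn y) (hHnn y)) x)
  have hcore := steinAux_core μ Iy hmean' b hb
  have Irhs : Integrable (fun y : ℝ => y ^ 2 * w y) μ := by
    refine (Iy2.const_mul b).mono' ((hsqmeas.mul hwmeas).aestronglyMeasurable)
      (Filter.Eventually.of_forall fun y => ?_)
    rw [Real.norm_eq_abs, abs_of_nonneg (mul_nonneg (sq_nonneg y) (hwnn y))]
    have hwb : w y ≤ b := min_le_left _ _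
    nlinarith [sq_nonneg y, hwnn y]
  have rhs_eq : ∫ y, y ^ 2 * w y ∂μ = (∫⁻ y, ENNReal.ofReal (y ^ 2 * w y) ∂μ).toReal :=
    integral_eq_lintegral_of_nonneg_ae
      (Filter.Eventually.of_forall fun y => mul_nonneg (sq_nonneg y) (hwnn y)) Irhs.1
  have hRne : (∫⁻ y, ENNReal.ofReal (y ^ 2 * w y) ∂μ) ≠ ⊤ := by
    rw [← ofReal_integral_eq_lintegral_ofReal Irhs
      (Filter.Eventually.of_forall fun y => mul_nonneg (sq_nonneg y) (hwnn y))]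
    exact ENNReal.ofReal_ne_top
  rw [lhs_eq, rhs_eq]
  exact ENNReal.toReal_mono hRne (le_trans h1 hcore)
end
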